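/- Let A be a non-periodic ⋆-hypercentral T-brace and let T be the torsion subgroup of the additive group (A,+). Then T is an ideal of A and the quotient brace A/T is abelian. -/

import Mathlib

/-!
Basic theory of left braces (skew left braces of abelian type), following
Dixon–Kurdachenko–Subbotin, "On the structure of braces whose subideals are ideals".
-/

universe u v

/-- A left brace: an abelian group `(A,+)`, a group `(A,·)`, satisfying
`a(b+c) = ab + ac - a`.  (The additive and multiplicative identities then coincide.) -/
class LeftBrace (A : Type u) extends AddCommGroup A, Group A where
  mul_add_eq : ∀ a b c : A, a * (b + c) = a * b + a * c - a

namespace LeftBrace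

variable {A : Type u} [LeftBrace A]

/-- The star operation `a ⋆ b = ab - a - b`. -/
def bstar (a b : A) : A := a * b - a - b

/-- A subset of a left brace is a subbrace if it is closed under the additive-group
and multiplicative-group operations (equivalently, it is a left brace under the
restricted operations). -/
structure IsSubbrace (S : Set A) : Prop where
  zero_mem : (0 : A) ∈ S
  add_mem : ∀ {a b : A}, a ∈ S → b ∈ S → a + b ∈ S
  neg_mem : ∀ {a : A}, a ∈ S → -a ∈ S
  mul_mem : ∀ {a b : A}, a ∈ S → b ∈ S → a * b ∈ S
  inv_mem : ∀ {a : A}, a ∈ S → a⁻¹ ∈ S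

/-- `I` is an ideal of the subbrace `J`: `I ⊆ J`, both are subbraces, and
`a ⋆ z, z ⋆ a ∈ I` for all `a ∈ J`, `z ∈ I`. -/
structure IsIdealIn (I J : Set A) : Prop where
  subset : I ⊆ J
  subbrace : IsSubbrace I
  ambient_subbrace : IsSubbrace J
  star_mem_left : ∀ a ∈ J, ∀ z ∈ I, bstar a z ∈ I
  star_mem_right : ∀ a ∈ J, ∀ z ∈ I, bstar z a ∈ I

/-- `I` is an ideal of the brace `A`. -/
def IsIdeal (I : Set A) : Prop := IsIdealIn I (Set.univ : Set A)

/-- `A` is a T-brace if being an ideal is a transitive relation: an ideal of an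
ideal of `A` is an ideal of `A`. -/
def IsTBrace (A : Type u) [LeftBrace A] : Prop :=
  ∀ I J : Set A, IsIdealIn I J → IsIdeal J → IsIdeal I

/-- The `⋆`-center `ζ(⋆,A) = {a | a ⋆ x = x ⋆ a = 0 for all x}`. -/
def starCenter (A : Type u) [LeftBrace A] : Set A :=
  {a : A | ∀ x : A, bstar a x = 0 ∧ bstar x a = 0}

/-- The preimage in `A` of the `⋆`-center of the quotient of `A` by (the ideal) `S`:
`a` belongs to it iff `a ⋆ x ∈ S` and `x ⋆ a ∈ S` for every `x ∈ A`. -/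
def nextCenter (A : Type u) [LeftBrace A] (S : Set A) : Set A :=
  {a : A | ∀ x : A, bstar a x ∈ S ∧ bstar x a ∈ S}

/-- The upper `⋆`-central series, indexed by naturals:
`ζ₀(⋆,A) = 0` and `ζ_{n+1}(⋆,A)/ζ_n(⋆,A) = ζ(⋆, A/ζ_n(⋆,A))`. -/
def zetaNat (A : Type u) [LeftBrace A] : ℕ → Set A
  | 0 => ({0} : Set A)
  | n + 1 => nextCenter A (zetaNat A n)

/-- The upper `⋆`-central series, indexed by ordinals (unions at limit ordinals). -/
noncomputable def zetaOrd (A : Type u) [LeftBrace A] (o : Ordinal.{v}) : Set A :=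
  Ordinal.limitRecOn o (({0} : Set A))
    (fun _ ih => nextCenter A ih)
    (fun o _ ih => ⋃ (o' : Ordinal) (h : o' < o), ih o' h)

/-- The upper `⋆`-hypercenter `ζ_∞(⋆,A)`: the final (stable) term of the upper
`⋆`-central series, i.e. the union of all its terms. -/
noncomputable def starHypercenter (A : Type u) [LeftBrace A] : Set A :=
  ⋃ o : Ordinal.{u}, zetaOrd A o

/-- `A` is `⋆`-hypercentral if `A = ζ_γ(⋆,A)` for some ordinal `γ`. -/
def IsStarHypercentral (A : Type u) [LeftBrace A] : Prop :=
  ∃ γ : Ordinal.{u}, zetaOrd A γ = (Set.univ : Set A)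

/-- `K ⋆ L`: the additive subgroup of `(A,+)` generated by all `x ⋆ y`, `x ∈ K`, `y ∈ L`. -/
def setStar (K L : Set A) : AddSubgroup A :=
  AddSubgroup.closure {z : A | ∃ x ∈ K, ∃ y ∈ L, z = bstar x y}

/-- `rightStarSeries A n = A^{(n+1)}`, where `A^{(1)} = A` and `A^{(n+1)} = A^{(n)} ⋆ A`. -/
def rightStarSeries (A : Type u) [LeftBrace A] : ℕ → Set A
  | 0 => (Set.univ : Set A)
  | n + 1 => ((setStar (rightStarSeries A n) (Set.univ : Set A) : AddSubgroup A) : Set A)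

/-- `leftStarSeries A n = A^{n+1}`, where `A^1 = A` and `A^{n+1} = A ⋆ A^n`. -/
def leftStarSeries (A : Type u) [LeftBrace A] : ℕ → Set A
  | 0 => (Set.univ : Set A)
  | n + 1 => ((setStar (Set.univ : Set A) (leftStarSeries A n) : AddSubgroup A) : Set A)

/-- `A` is Smoktunowicz-nilpotent if `A^{(n)} = A^k = 0` for some naturals `n, k`. -/
def IsSmoktunowiczNilpotent (A : Type u) [LeftBrace A] : Prop :=
  ∃ n k : ℕ, rightStarSeries A n = ({0} : Set A) ∧ leftStarSeries A k = ({0} : Set A)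

/-- The subbrace generated by a subset `M`: the intersection of all subbraces containing `M`. -/
def braceClosure (M : Set A) : Set A := ⋂₀ {S : Set A | IsSubbrace S ∧ M ⊆ S}

end LeftBrace

namespace LeftBrace

variable {A : Type u} [LeftBrace A]

/-- The lambda map `λ_a(x) = a x - a`. -/
def lam (a x : A) : A := a * x - a

theorem mul_zero' (a : A) : a * 0 = a := by
  have h := mul_add_eq a 0 0
  rw [add_zero] at h
  have h' : a * 0 = a * 0 + (a * 0 - a) := by
    rw [← add_sub_assoc]; exact h
  have h3 : a * 0 - a = 0 := left_eq_add.mp h'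
  exact sub_eq_zero.mp h3

theorem one_eq_zero : (1 : A) = 0 := by
  have h := mul_zero' (1 : A)
  rw [one_mul] at h
  exact h.symm

theorem zero_mul' (x : A) : 0 * x = x := by
  have : (0 : A) * x = 1 * x := by rw [one_eq_zero]
  rw [this, one_mul]

theorem lam_add (a x y : A) : lam a (x + y) = lam a x + lam a y := by
  unfold lam
  rw [mul_add_eq]
  abel

/-- `lam a` as an additive monoid hom. -/
def lamHom (a : A) : A →+ A := AddMonoidHom.mk' (lam a) (lam_add a)

theorem lamHom_apply (a x : A) : lamHom a x = lam a x := rfl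

theorem lam_zero (a : A) : lam a 0 = 0 := by
  unfold lam; rw [mul_zero']; abel

theorem lam_neg (a x : A) : lam a (-x) = -lam a x := by
  have := map_neg (lamHom a) x
  simpa [lamHom_apply] using this

theorem lam_sub (a x y : A) : lam a (x - y) = lam a x - lam a y := by
  have := map_sub (lamHom a) x y
  simpa [lamHom_apply] using this

theorem lam_nsmul (a : A) (n : ℕ) (x : A) : lam a (n • x) = n • lam a x := by
  have := map_nsmul (lamHom a) n x
  simpa [lamHom_apply] using this

theorem lam_zsmul (a : A) (n : ℤ) (x : A) : lam a (n • x) = n • lam a x := by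
  have := map_zsmul (lamHom a) n x
  simpa [lamHom_apply] using this

theorem neg_mul_right' (a b : A) : a * (-b) = a + a - a * b := by
  have h : a * (-b) - a = -(a * b - a) := lam_neg a b
  have h2 := eq_add_of_sub_eq h
  rw [h2]; abel

theorem lam_mul (a b x : A) : lam (a * b) x = lam a (lam b x) := by
  unfold lam
  have h1 : a * (b * x - b) = a * (b * x) + a * (-b) - a := by
    rw [sub_eq_add_neg, mul_add_eq]
  rw [h1, neg_mul_right', mul_assoc]
  abel

theorem lam_one (x : A) : lam 1 x = x := by
  unfold lam; rw [one_mul, one_eq_zero, sub_zero]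

theorem lam_lam_inv (a x : A) : lam a (lam a⁻¹ x) = x := by
  rw [← lam_mul, mul_inv_cancel, lam_one]

theorem lam_inv_lam (a x : A) : lam a⁻¹ (lam a x) = x := by
  rw [← lam_mul, inv_mul_cancel, lam_one]

theorem mul_eq (a b : A) : a * b = lam a b + a := by
  unfold lam; abel

theorem bstar_eq (a b : A) : bstar a b = lam a b - b := by
  unfold bstar lam; abel

theorem lam_eq (a x : A) : lam a x = x + bstar a x := by
  rw [bstar_eq]; abel

theorem bstar_add_right (a x y : A) : bstar a (x + y) = bstar a x + bstar a y := by
  rw [bstar_eq, bstar_eq, bstar_eq, lam_add]; abel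

/-- `bstar a` as an additive monoid hom. -/
def bstarHom (a : A) : A →+ A := AddMonoidHom.mk' (bstar a) (bstar_add_right a)

theorem bstarHom_apply (a x : A) : bstarHom a x = bstar a x := rfl

theorem bstar_zero_right (a : A) : bstar a 0 = 0 := by
  rw [bstar_eq, lam_zero]; abel

theorem bstar_neg_right (a x : A) : bstar a (-x) = -bstar a x := by
  have := map_neg (bstarHom a) x
  simpa [bstarHom_apply] using this

theorem bstar_zsmul_right (a : A) (n : ℤ) (x : A) : bstar a (n • x) = n • bstar a x := by
  have := map_zsmul (bstarHom a) n x
  simpa [bstarHom_apply] using this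

theorem bstar_zero_left (x : A) : bstar 0 x = 0 := by
  unfold bstar; rw [zero_mul']; abel

theorem add_eq_mul (a b : A) : a + b = a * lam a⁻¹ b := by
  rw [mul_eq, lam_lam_inv]; abel

theorem lam_add_left (a b x : A) : lam (a + b) x = lam a (lam (lam a⁻¹ b) x) := by
  rw [add_eq_mul a b, lam_mul]

theorem inv_eq_neg_lam (a : A) : a⁻¹ = -lam a⁻¹ a := by
  have h := mul_eq a⁻¹ a
  rw [inv_mul_cancel, one_eq_zero] at h
  exact eq_neg_of_add_eq_zero_right h.symm

theorem lam_inv_shift (a w : A) : lam a⁻¹ w = w - lam a⁻¹ (bstar a w) := by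
  have h : lam a⁻¹ (bstar a w) = w - lam a⁻¹ w := by
    rw [bstar_eq, lam_sub, lam_inv_lam]
  rw [h]; abel

theorem bstar_inv_left (a x : A) : bstar a⁻¹ x = -lam a⁻¹ (bstar a x) := by
  rw [bstar_eq, lam_inv_shift]; abel

end LeftBrace
namespace LeftBrace

variable {A : Type u} [LeftBrace A]

theorem lam_tors (a : A) {t : A} (h : IsOfFinAddOrder t) : IsOfFinAddOrder (lam a t) := by
  rw [isOfFinAddOrder_iff_nsmul_eq_zero] at h ⊢
  obtain ⟨n, hn, h0⟩ := h
  exact ⟨n, hn, by rw [← lam_nsmul, h0, lam_zero]⟩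

theorem tors_of_zsmul {m : ℤ} (hm : m ≠ 0) {a : A} (h : IsOfFinAddOrder (m • a)) :
    IsOfFinAddOrder a := by
  rw [isOfFinAddOrder_iff_nsmul_eq_zero] at h ⊢
  obtain ⟨n, hn, h0⟩ := h
  have hK : ((n : ℤ) * m) • a = 0 := by
    rw [mul_zsmul, natCast_zsmul, h0]
  have hKne : (n : ℤ) * m ≠ 0 := by
    exact mul_ne_zero (by exact_mod_cast hn.ne') hm
  refine ⟨((n : ℤ) * m).natAbs, Int.natAbs_pos.mpr hKne, ?_⟩
  have : ((((n : ℤ) * m).natAbs : ℤ)) • a = 0 := by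
    rcases Int.natAbs_eq ((n : ℤ) * m) with he | he
    · rw [← he]; exact hK
    · have : (-(((n : ℤ) * m).natAbs : ℤ)) • a = 0 := by rw [← he]; exact hK
      rw [neg_zsmul] at this
      exact neg_eq_zero.mp this
  rw [natCast_zsmul] at this
  exact this

/-- The torsion subgroup of `(A,+)` as an `AddSubgroup`. -/
def torsionSubgroup (A : Type u) [LeftBrace A] : AddSubgroup A where
  carrier := {a : A | IsOfFinAddOrder a}
  zero_mem' := IsOfFinAddOrder.zero
  add_mem' := fun ha hb => ha.add hb
  neg_mem' := fun ha => ha.neg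

theorem mem_torsionSubgroup {a : A} : a ∈ torsionSubgroup A ↔ IsOfFinAddOrder a := Iff.rfl

/-- An `IsSubbrace` set as an additive subgroup. -/
def IsSubbrace.addSubgroup {S : Set A} (h : IsSubbrace S) : AddSubgroup A where
  carrier := S
  zero_mem' := h.zero_mem
  add_mem' := fun ha hb => h.add_mem ha hb
  neg_mem' := fun ha => h.neg_mem ha

theorem IsSubbrace.mem_addSubgroup {S : Set A} (h : IsSubbrace S) {a : A} :
    a ∈ h.addSubgroup ↔ a ∈ S := Iff.rfl

theorem IsSubbrace.zsmul_mem {S : Set A} (h : IsSubbrace S) {a : A} (ha : a ∈ S) (m : ℤ) :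
    m • a ∈ S := h.addSubgroup.zsmul_mem ha m

theorem IsSubbrace.sub_mem {S : Set A} (h : IsSubbrace S) {a b : A} (ha : a ∈ S) (hb : b ∈ S) :
    a - b ∈ S := h.addSubgroup.sub_mem ha hb

theorem isSubbrace_univ : IsSubbrace (Set.univ : Set A) :=
  ⟨trivial, fun _ _ => trivial, fun _ => trivial, fun _ _ => trivial, fun _ => trivial⟩

theorem IsIdeal.star_left {I : Set A} (h : IsIdeal I) (a : A) {z : A} (hz : z ∈ I) :
    bstar a z ∈ I := IsIdealIn.star_mem_left h a trivial z hz

theorem IsIdeal.star_right {I : Set A} (h : IsIdeal I) (a : A) {z : A} (hz : z ∈ I) :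
    bstar z a ∈ I := IsIdealIn.star_mem_right h a trivial z hz

theorem IsIdeal.sb {I : Set A} (h : IsIdeal I) : IsSubbrace I := IsIdealIn.subbrace h

theorem IsIdeal.lam_mem {I : Set A} (h : IsIdeal I) (a : A) {z : A} (hz : z ∈ I) :
    lam a z ∈ I := by
  rw [lam_eq]
  exact h.sb.add_mem hz (h.star_left a hz)

theorem mem_nextCenter {S : Set A} {a : A} :
    a ∈ nextCenter A S ↔ ∀ x : A, bstar a x ∈ S ∧ bstar x a ∈ S := Iff.rfl

theorem isIdeal_nextCenter {S : Set A} (hS : IsIdeal S) : IsIdeal (nextCenter A S) := by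
  have Szero : (0 : A) ∈ S := hS.sb.zero_mem
  have Sadd : ∀ {a b : A}, a ∈ S → b ∈ S → a + b ∈ S := fun ha hb => hS.sb.add_mem ha hb
  have Sneg : ∀ {a : A}, a ∈ S → -a ∈ S := fun ha => hS.sb.neg_mem ha
  have SsubN : S ⊆ nextCenter A S := fun s hs x => ⟨hS.star_right x hs, hS.star_left x hs⟩
  have hshift : ∀ (a : A) {w : A}, w ∈ nextCenter A S → ∃ s ∈ S, lam a⁻¹ w = w + s := by
    intro a w hw
    refine ⟨-lam a⁻¹ (bstar a w), Sneg (hS.lam_mem a⁻¹ ((hw a).2)), ?_⟩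
    rw [lam_inv_shift]; abel
  have Nadd : ∀ {z z' : A}, z ∈ nextCenter A S → z' ∈ nextCenter A S →
      z + z' ∈ nextCenter A S := by
    intro z z' hz hz'
    intro x
    constructor
    · obtain ⟨s0, hs0, he⟩ := hshift z hz'
      set s1 := lam z'⁻¹ s0 with hs1def
      have hs1 : s1 ∈ S := hS.lam_mem z'⁻¹ hs0
      have hσ : bstar s1 x ∈ S := hS.star_right x hs1
      have e1 : lam (z + z') x = lam z (lam z' (x + bstar s1 x)) := by
        rw [lam_add_left, he, lam_add_left z' s0, ← hs1def, ← lam_eq]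
      have key : bstar (z + z') x
          = bstar z' x + bstar z (lam z' x) + lam z (lam z' (bstar s1 x)) := by
        rw [bstar_eq, e1, lam_add z', lam_add z, lam_eq z (lam z' x), lam_eq z' x]
        abel
      rw [key]
      exact Sadd (Sadd ((hz' x).1) ((hz (lam z' x)).1)) (hS.lam_mem z (hS.lam_mem z' hσ))
    · have : bstar x (z + z') = bstar x z + bstar x z' := bstar_add_right x z z'
      rw [this]
      exact Sadd ((hz x).2) ((hz' x).2)
  have Ninv : ∀ {z : A}, z ∈ nextCenter A S → z⁻¹ ∈ nextCenter A S := by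
    intro z hz
    set s2 := lam z⁻¹ (bstar z z) with hs2d
    have hs2 : s2 ∈ S := hS.lam_mem z⁻¹ ((hz z).1)
    have hzi : z⁻¹ = -z + s2 := by
      conv_lhs => rw [inv_eq_neg_lam, lam_inv_shift, ← hs2d]
      abel
    intro x
    constructor
    · have h1 : bstar z⁻¹ x = -lam z⁻¹ (bstar z x) := bstar_inv_left z x
      rw [h1]
      exact Sneg (hS.lam_mem z⁻¹ ((hz x).1))
    · have h2 : bstar x z⁻¹ = -bstar x z + bstar x s2 := by
        rw [hzi, bstar_add_right, bstar_neg_right]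
      rw [h2]
      exact Sadd (Sneg ((hz x).2)) (hS.star_left x hs2)
  have Nneg : ∀ {z : A}, z ∈ nextCenter A S → -z ∈ nextCenter A S := by
    intro z hz
    set s2 := lam z⁻¹ (bstar z z) with hs2d
    have hs2 : s2 ∈ S := hS.lam_mem z⁻¹ ((hz z).1)
    have hzi : z⁻¹ = -z + s2 := by
      conv_lhs => rw [inv_eq_neg_lam, lam_inv_shift, ← hs2d]
      abel
    have h : -z = z⁻¹ + -s2 := by rw [hzi]; abel
    rw [h]
    exact Nadd (Ninv hz) (SsubN (Sneg hs2))
  have Nmul : ∀ {z z' : A}, z ∈ nextCenter A S → z' ∈ nextCenter A S →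
      z * z' ∈ nextCenter A S := by
    intro z z' hz hz'
    have h : z * z' = bstar z z' + z + z' := by rw [mul_eq, lam_eq]; abel
    rw [h]
    exact Nadd (Nadd (SsubN ((hz z').1)) hz) hz'
  exact
    { subset := Set.subset_univ _
      subbrace := ⟨SsubN Szero, Nadd, Nneg, Nmul, Ninv⟩
      ambient_subbrace := isSubbrace_univ
      star_mem_left := fun a _ z hz => SsubN ((hz a).2)
      star_mem_right := fun a _ z hz => SsubN ((hz a).1) }

end LeftBrace
namespace LeftBrace

variable {A : Type u} [LeftBrace A]

theorem zetaOrd_zero : zetaOrd A (0 : Ordinal.{v}) = ({0} : Set A) :=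
  Ordinal.limitRecOn_zero _ _ _

theorem zetaOrd_succ (o : Ordinal.{v}) :
    zetaOrd A (Order.succ o) = nextCenter A (zetaOrd A o) :=
  Ordinal.limitRecOn_succ _ _ _ _

theorem zetaOrd_limit (o : Ordinal.{v}) (h : Order.IsSuccLimit o) :
    zetaOrd A o = ⋃ (o' : Ordinal) (_ : o' < o), zetaOrd A o' :=
  Ordinal.limitRecOn_limit _ _ _ _ h

theorem isIdeal_zero_set : IsIdeal ({0} : Set A) := by
  have hinv : ((0 : A))⁻¹ = 0 := by rw [← one_eq_zero, inv_one]
  refine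
    { subset := Set.subset_univ _
      subbrace := ?_
      ambient_subbrace := isSubbrace_univ
      star_mem_left := ?_
      star_mem_right := ?_ }
  · constructor
    · rfl
    · intro a b ha hb
      simp only [Set.mem_singleton_iff] at *
      rw [ha, hb, add_zero]
    · intro a ha
      simp only [Set.mem_singleton_iff] at *
      rw [ha, neg_zero]
    · intro a b ha hb
      simp only [Set.mem_singleton_iff] at *
      rw [ha, hb, mul_zero']
    · intro a ha
      simp only [Set.mem_singleton_iff] at *
      rw [ha, hinv]
  · intro a _ z hz
    simp only [Set.mem_singleton_iff] at *
    rw [hz, bstar_zero_right]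
  · intro a _ z hz
    simp only [Set.mem_singleton_iff] at *
    rw [hz, bstar_zero_left]

theorem isIdeal_zetaOrd_and_mono (o : Ordinal.{v}) :
    IsIdeal (zetaOrd A o) ∧ ∀ o' ≤ o, zetaOrd A o' ⊆ zetaOrd A o := by
  induction o using Ordinal.limitRecOn with
  | zero =>
    refine ⟨by rw [zetaOrd_zero]; exact isIdeal_zero_set, ?_⟩
    intro o' ho'
    rw [nonpos_iff_eq_zero.mp ho']
  | add_one o ih =>
    rw [Ordinal.add_one_eq_succ]
    have hid : IsIdeal (zetaOrd A (Order.succ o)) := by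
      rw [zetaOrd_succ]; exact isIdeal_nextCenter ih.1
    refine ⟨hid, ?_⟩
    intro o' ho'
    rcases eq_or_lt_of_le ho' with h | h
    · rw [h]
    · have h1 : o' ≤ o := Order.lt_succ_iff.mp h
      have h2 : zetaOrd A o' ⊆ zetaOrd A o := ih.2 o' h1
      refine h2.trans ?_
      rw [zetaOrd_succ]
      intro z hz
      exact fun x => ⟨ih.1.star_right x hz, ih.1.star_left x hz⟩
  | limit o ho ih =>
    have hmono : ∀ o' ≤ o, zetaOrd A o' ⊆ zetaOrd A o := by
      intro o' ho'
      rcases eq_or_lt_of_le ho' with h | h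
      · rw [h]
      · rw [zetaOrd_limit o ho]
        intro z hz
        exact Set.mem_iUnion.mpr ⟨o', Set.mem_iUnion.mpr ⟨h, hz⟩⟩
    have hmem : ∀ {z : A}, z ∈ zetaOrd A o → ∃ o' < o, z ∈ zetaOrd A o' := by
      intro z hz
      rw [zetaOrd_limit o ho] at hz
      obtain ⟨o', ho'⟩ := Set.mem_iUnion.mp hz
      obtain ⟨hlt, hmem⟩ := Set.mem_iUnion.mp ho'
      exact ⟨o', hlt, hmem⟩
    have hup : ∀ {z : A} {o' : Ordinal}, o' < o → z ∈ zetaOrd A o' → z ∈ zetaOrd A o := by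
      intro z o' h hz
      exact hmono o' h.le hz
    refine ⟨?_, hmono⟩
    have two : ∀ {a b : A}, a ∈ zetaOrd A o → b ∈ zetaOrd A o →
        ∃ o' < o, a ∈ zetaOrd A o' ∧ b ∈ zetaOrd A o' := by
      intro a b ha hb
      obtain ⟨o1, h1, ha1⟩ := hmem ha
      obtain ⟨o2, h2, hb1⟩ := hmem hb
      refine ⟨max o1 o2, max_lt h1 h2, ?_, ?_⟩
      · exact (ih o1 h1).2 |> fun f => ((ih (max o1 o2) (max_lt h1 h2)).2 o1 (le_max_left _ _)) ha1
      · exact ((ih (max o1 o2) (max_lt h1 h2)).2 o2 (le_max_right _ _)) hb1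
    refine
      { subset := Set.subset_univ _
        subbrace := ?_
        ambient_subbrace := isSubbrace_univ
        star_mem_left := ?_
        star_mem_right := ?_ }
    · constructor
      · have h0 : (0 : Ordinal) < o := ho.pos
        exact hup h0 (by rw [zetaOrd_zero]; rfl)
      · intro a b ha hb
        obtain ⟨o', hlt, ha', hb'⟩ := two ha hb
        exact hup hlt ((ih o' hlt).1.sb.add_mem ha' hb')
      · intro a ha
        obtain ⟨o', hlt, ha'⟩ := hmem ha
        exact hup hlt ((ih o' hlt).1.sb.neg_mem ha')
      · intro a b ha hb
        obtain ⟨o', hlt, ha', hb'⟩ := two ha hb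
        exact hup hlt ((ih o' hlt).1.sb.mul_mem ha' hb')
      · intro a ha
        obtain ⟨o', hlt, ha'⟩ := hmem ha
        exact hup hlt ((ih o' hlt).1.sb.inv_mem ha')
    · intro a _ z hz
      obtain ⟨o', hlt, hz'⟩ := hmem hz
      exact hup hlt ((ih o' hlt).1.star_left a hz')
    · intro a _ z hz
      obtain ⟨o', hlt, hz'⟩ := hmem hz
      exact hup hlt ((ih o' hlt).1.star_right a hz')

theorem isIdeal_zetaOrd (o : Ordinal.{v}) : IsIdeal (zetaOrd A o) :=
  (isIdeal_zetaOrd_and_mono o).1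

end LeftBrace
namespace LeftBrace

variable {A : Type u} [LeftBrace A]

theorem tors_add {a b : A} (ha : IsOfFinAddOrder a) (hb : IsOfFinAddOrder b) :
    IsOfFinAddOrder (a + b) := ha.add hb

theorem tors_sub {a b : A} (ha : IsOfFinAddOrder a) (hb : IsOfFinAddOrder b) :
    IsOfFinAddOrder (a - b) :=
  mem_torsionSubgroup.mp ((torsionSubgroup A).sub_mem ha hb)

theorem tors_nsmul {a : A} (ha : IsOfFinAddOrder a) (n : ℕ) : IsOfFinAddOrder (n • a) :=
  mem_torsionSubgroup.mp ((torsionSubgroup A).nsmul_mem ha n)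

theorem tors_zsmul' {a : A} (ha : IsOfFinAddOrder a) (m : ℤ) : IsOfFinAddOrder (m • a) :=
  mem_torsionSubgroup.mp ((torsionSubgroup A).zsmul_mem ha m)

theorem tors_neg {a : A} (ha : IsOfFinAddOrder a) : IsOfFinAddOrder (-a) := ha.neg

theorem tors_zero : IsOfFinAddOrder (0 : A) := mem_torsionSubgroup.mp (torsionSubgroup A).zero_mem

theorem tors_sum {ι : Type*} (s : Finset ι) (f : ι → A)
    (h : ∀ i ∈ s, IsOfFinAddOrder (f i)) : IsOfFinAddOrder (∑ i ∈ s, f i) :=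
  mem_torsionSubgroup.mp (AddSubgroup.sum_mem (torsionSubgroup A) h)

theorem tors_bstar_self {t : A} (ht : IsOfFinAddOrder t) (y : A) :
    IsOfFinAddOrder (bstar y t) := by
  rw [bstar_eq]
  exact tors_sub (lam_tors y ht) ht

/-- The "word part" of `t^k`, so that `t^k = k • t + tw t k`. -/
def tw (t : A) : ℕ → A
  | 0 => 0
  | k + 1 => k • bstar t t + tw t k + bstar t (tw t k)

theorem pow_eq_tw (t : A) : ∀ k : ℕ, t ^ k = k • t + tw t k
  | 0 => by
    rw [pow_zero, one_eq_zero]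
    show (0 : A) = 0 • t + (0 : A)
    rw [zero_smul, add_zero]
  | k + 1 => by
    have ih := pow_eq_tw t k
    rw [pow_succ']
    rw [mul_eq, ih, lam_add, lam_nsmul, lam_eq t t, lam_eq t (tw t k)]
    show _ = (k + 1) • t + (k • bstar t t + tw t k + bstar t (tw t k))
    rw [succ_nsmul, smul_add]
    abel

theorem lam_pow_sum (t y : A) : ∀ k : ℕ,
    lam (t ^ k) y = y + ∑ i ∈ Finset.range k, lam (t ^ i) (bstar t y)
  | 0 => by rw [pow_zero, lam_one, Finset.range_zero, Finset.sum_empty, add_zero]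
  | k + 1 => by
    rw [pow_succ, lam_mul, lam_eq t y, lam_add, lam_pow_sum t y k, Finset.sum_range_succ]
    abel

/-- In a `⋆`-hypercentral left brace, `t ⋆ x` is torsion whenever `t` is torsion:
the torsion subgroup is an ideal. -/
theorem tors_bstar_left_of_hypercentral (hhc : IsStarHypercentral A) {t : A}
    (ht : IsOfFinAddOrder t) (x : A) : IsOfFinAddOrder (bstar t x) := by
  obtain ⟨γ, hγ⟩ := hhc
  have main : ∀ β : Ordinal.{u}, ∀ t : A, IsOfFinAddOrder t → t ∈ zetaOrd A β →
      ∀ α : Ordinal.{u}, ∀ x : A, x ∈ zetaOrd A α → IsOfFinAddOrder (bstar t x) := by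
    intro β
    induction β using Ordinal.limitRecOn with
    | zero =>
      intro t _ htm α x _
      rw [zetaOrd_zero, Set.mem_singleton_iff] at htm
      rw [htm, bstar_zero_left]
      exact tors_zero
    | add_one β ihβ =>
      rw [Ordinal.add_one_eq_succ]
      intro t ht htm
      rw [zetaOrd_succ] at htm
      intro α
      induction α using Ordinal.limitRecOn with
      | zero =>
        intro x hxm
        rw [zetaOrd_zero, Set.mem_singleton_iff] at hxm
        rw [hxm, bstar_zero_right]
        exact tors_zero
      | add_one α ihα =>
        rw [Ordinal.add_one_eq_succ]
        intro x hxm0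
        have hxm : x ∈ nextCenter A (zetaOrd A α) := by
          rw [← zetaOrd_succ]; exact hxm0
        obtain ⟨n, hn, hnt⟩ := isOfFinAddOrder_iff_nsmul_eq_zero.mp ht
        have hζβ := isIdeal_zetaOrd (A := A) β
        have httT : IsOfFinAddOrder (bstar t t) := tors_bstar_self ht t
        have hwT : ∀ k : ℕ, IsOfFinAddOrder (tw t k) := by
          intro k
          induction k with
          | zero => exact tors_zero
          | succ k ihk =>
            show IsOfFinAddOrder (k • bstar t t + tw t k + bstar t (tw t k))
            exact tors_add (tors_add (tors_nsmul httT k) ihk) (tors_bstar_self ihk t)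
        have hwZ : ∀ k : ℕ, tw t k ∈ zetaOrd A β := by
          intro k
          induction k with
          | zero => exact hζβ.sb.zero_mem
          | succ k ihk =>
            show k • bstar t t + tw t k + bstar t (tw t k) ∈ zetaOrd A β
            have h1 : bstar t t ∈ zetaOrd A β := (htm t).1
            have h2 : k • bstar t t ∈ zetaOrd A β := hζβ.sb.addSubgroup.nsmul_mem h1 k
            exact hζβ.sb.add_mem (hζβ.sb.add_mem h2 ihk) (hζβ.star_left t ihk)
        set v := bstar t x with hvdef
        have hv : v ∈ zetaOrd A α := (hxm t).2
        have hv2T : IsOfFinAddOrder (bstar t v) := ihα v hv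
        have htn : t ^ n = tw t n := by rw [pow_eq_tw t n, hnt, zero_add]
        have hWdef : bstar (tw t n) x = ∑ i ∈ Finset.range n, lam (t ^ i) v := by
          rw [← htn, bstar_eq, lam_pow_sum t x n, ← hvdef]
          abel
        have hWT : IsOfFinAddOrder (bstar (tw t n) x) :=
          ihβ (tw t n) (hwT n) (hwZ n) (Order.succ α) x hxm0
        have hterm : ∀ i : ℕ, lam (t ^ i) v
            = v + ∑ j ∈ Finset.range i, lam (t ^ j) (bstar t v) :=
          fun i => lam_pow_sum t v i
        have hsum : bstar (tw t n) x
            = n • v + ∑ i ∈ Finset.range n, ∑ j ∈ Finset.range i, lam (t ^ j) (bstar t v) := by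
          rw [hWdef, Finset.sum_congr rfl (fun i _ => hterm i), Finset.sum_add_distrib,
            Finset.sum_const, Finset.card_range]
        have hrest : IsOfFinAddOrder
            (∑ i ∈ Finset.range n, ∑ j ∈ Finset.range i, lam (t ^ j) (bstar t v)) := by
          refine tors_sum _ _ (fun i _ => tors_sum _ _ (fun j _ => ?_))
          exact lam_tors _ hv2T
        have hnv : IsOfFinAddOrder (n • v) := by
          have heq : n • v = bstar (tw t n) x
              - ∑ i ∈ Finset.range n, ∑ j ∈ Finset.range i, lam (t ^ j) (bstar t v) := by
            rw [hsum]; abel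
          rw [heq]
          exact tors_sub hWT hrest
        have hne : ((n : ℤ)) ≠ 0 := by exact_mod_cast hn.ne'
        refine tors_of_zsmul hne ?_
        rw [natCast_zsmul]
        exact hnv
      | limit α hαl ihα =>
        intro x hxm
        rw [zetaOrd_limit α hαl] at hxm
        obtain ⟨o', ho'⟩ := Set.mem_iUnion.mp hxm
        obtain ⟨hlt, hmem⟩ := Set.mem_iUnion.mp ho'
        exact ihα o' hlt x hmem
    | limit β hβl ihβ =>
      intro t ht htm
      rw [zetaOrd_limit β hβl] at htm
      obtain ⟨o', ho'⟩ := Set.mem_iUnion.mp htm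
      obtain ⟨hlt, hmem⟩ := Set.mem_iUnion.mp ho'
      exact ihβ o' hlt t ht hmem
  have hxu : x ∈ zetaOrd A γ := by rw [hγ]; trivial
  have htu : t ∈ zetaOrd A γ := by rw [hγ]; trivial
  exact main γ t ht htu γ x hxu

end LeftBrace
namespace LeftBrace

variable {A : Type u} [LeftBrace A]

/-- The preimage of the center of `A/T`. -/
def torD (A : Type u) [LeftBrace A] : Set A := nextCenter A {a : A | IsOfFinAddOrder a}

theorem isIdeal_torD (hTid : IsIdeal {a : A | IsOfFinAddOrder a}) : IsIdeal (torD A) :=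
  isIdeal_nextCenter hTid

theorem torD_star1 {d : A} (hd : d ∈ torD A) (y : A) : IsOfFinAddOrder (bstar d y) := (hd y).1

theorem torD_star2 {d : A} (hd : d ∈ torD A) (y : A) : IsOfFinAddOrder (bstar y d) := (hd y).2

theorem tors_subset_torD (hTid : IsIdeal {a : A | IsOfFinAddOrder a}) {t : A}
    (ht : IsOfFinAddOrder t) : t ∈ torD A :=
  fun y => ⟨hTid.star_right y ht, hTid.star_left y ht⟩

theorem lam_congr_D (hTid : IsIdeal {a : A | IsOfFinAddOrder a}) (a : A) {c : A}
    (hc : c ∈ torD A) (x : A) : IsOfFinAddOrder (lam (a + c) x - lam a x) := by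
  have hD := isIdeal_torD hTid
  have hcd : lam a⁻¹ c ∈ torD A := hD.lam_mem a⁻¹ hc
  have heq : lam (a + c) x - lam a x = lam a (bstar (lam a⁻¹ c) x) := by
    rw [lam_add_left a c x, lam_eq (lam a⁻¹ c) x, lam_add]
    abel
  rw [heq]
  exact lam_tors a (torD_star1 hcd x)

theorem zpow_nat_sub_mem (hTid : IsIdeal {a : A | IsOfFinAddOrder a}) {u : A}
    (hu : u ∈ nextCenter A (torD A)) (k : ℕ) : u ^ k - k • u ∈ torD A := by
  have hD := isIdeal_torD hTid
  induction k with
  | zero =>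
    rw [pow_zero, one_eq_zero, zero_smul, sub_zero]
    exact hD.sb.zero_mem
  | succ k ih =>
    have h2 : lam u (u ^ k) = lam u (u ^ k - k • u) + k • lam u u := by
      rw [← lam_nsmul, ← lam_add, sub_add_cancel]
    have heq : u ^ (k + 1) - (k + 1) • u = k • bstar u u + lam u (u ^ k - k • u) := by
      rw [pow_succ', mul_eq, h2, lam_eq u u, succ_nsmul, smul_add]
      abel
    rw [heq]
    refine hD.sb.add_mem (hD.sb.addSubgroup.nsmul_mem ((hu u).1) k) (hD.lam_mem u ih)

theorem inv_add_mem (hTid : IsIdeal {a : A | IsOfFinAddOrder a}) {u : A}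
    (hu : u ∈ nextCenter A (torD A)) : u⁻¹ + u ∈ torD A := by
  have hD := isIdeal_torD hTid
  have heq : u⁻¹ + u = lam u⁻¹ (bstar u u) := by
    conv_lhs => rw [inv_eq_neg_lam, lam_inv_shift]
    abel
  rw [heq]
  exact hD.lam_mem u⁻¹ ((hu u).1)

theorem zpow_sub_mem (hTid : IsIdeal {a : A | IsOfFinAddOrder a}) {u : A}
    (hu : u ∈ nextCenter A (torD A)) (m : ℤ) : u ^ m - m • u ∈ torD A := by
  have hD := isIdeal_torD hTid
  have hN := isIdeal_nextCenter hD
  cases m with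
  | ofNat k =>
    have := zpow_nat_sub_mem hTid hu k
    rw [Int.ofNat_eq_coe, zpow_natCast, natCast_zsmul]
    exact this
  | negSucc k =>
    have huinv : u⁻¹ ∈ nextCenter A (torD A) := hN.sb.inv_mem hu
    have h1 := zpow_nat_sub_mem hTid huinv (k + 1)
    have h2 := inv_add_mem hTid hu
    have heq : u ^ (Int.negSucc k) - (Int.negSucc k) • u
        = (u⁻¹ ^ (k + 1) - (k + 1) • u⁻¹) + (k + 1) • (u⁻¹ + u) := by
      rw [zpow_negSucc, ← inv_pow, negSucc_zsmul, smul_add]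
      abel
    rw [heq]
    exact hD.sb.add_mem h1 (hD.sb.addSubgroup.nsmul_mem h2 (k + 1))

theorem bstar_pow_sub (hTid : IsIdeal {a : A | IsOfFinAddOrder a}) {u : A}
    (hu : u ∈ nextCenter A (torD A)) (k : ℕ) (x : A) :
    IsOfFinAddOrder (bstar (u ^ k) x - k • bstar u x) := by
  induction k with
  | zero =>
    rw [pow_zero, one_eq_zero, bstar_zero_left, zero_smul, sub_zero]
    exact tors_zero
  | succ k ih =>
    have key : bstar (u ^ (k + 1)) x
        = bstar (u ^ k) x + bstar u x + bstar (u ^ k) (bstar u x) := by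
      rw [bstar_eq (u ^ (k + 1)) x, pow_succ, lam_mul, lam_eq u x, lam_add,
        lam_eq (u ^ k) x, lam_eq (u ^ k) (bstar u x)]
      abel
    have hlast : IsOfFinAddOrder (bstar (u ^ k) (bstar u x)) := torD_star2 ((hu x).1) (u ^ k)
    have heq : bstar (u ^ (k + 1)) x - (k + 1) • bstar u x
        = (bstar (u ^ k) x - k • bstar u x) + bstar (u ^ k) (bstar u x) := by
      rw [key, succ_nsmul]
      abel
    rw [heq]
    exact tors_add ih hlast

theorem bstar_smul_add (hTid : IsIdeal {a : A | IsOfFinAddOrder a}) {z : A}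
    (hzN : z ∈ nextCenter A (torD A)) (m : ℤ) {c : A} (hc : c ∈ torD A) (x : A) :
    IsOfFinAddOrder (bstar (m • z + c) x - m • bstar z x) := by
  have hD := isIdeal_torD hTid
  have hN := isIdeal_nextCenter hD
  have hd : z ^ m - m • z ∈ torD A := zpow_sub_mem hTid hzN m
  have he : m • z + c = z ^ m + (c - (z ^ m - m • z)) := by abel
  have h1 : IsOfFinAddOrder (lam (m • z + c) x - lam (z ^ m) x) := by
    rw [he]
    exact lam_congr_D hTid (z ^ m) (hD.sb.sub_mem hc hd) x
  have hbd : bstar (m • z + c) x - bstar (z ^ m) x = lam (m • z + c) x - lam (z ^ m) x := by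
    rw [bstar_eq, bstar_eq]
    abel
  have h2 : IsOfFinAddOrder (bstar (z ^ m) x - m • bstar z x) := by
    cases m with
    | ofNat k =>
      have := bstar_pow_sub hTid hzN k x
      rw [Int.ofNat_eq_coe, zpow_natCast, natCast_zsmul]
      exact this
    | negSucc k =>
      have h3 := bstar_pow_sub hTid (hN.sb.inv_mem hzN) (k + 1) x
      have h4 : IsOfFinAddOrder (bstar z⁻¹ x + bstar z x) := by
        have e2 : bstar z⁻¹ x + bstar z x = -(bstar z⁻¹ (bstar z x)) := by
          rw [bstar_inv_left z x, bstar_eq z⁻¹ (bstar z x), lam_inv_shift]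
          abel
        rw [e2]
        exact tors_neg (torD_star2 ((hzN x).1) z⁻¹)
      have heq : bstar (z ^ (Int.negSucc k)) x - (Int.negSucc k) • bstar z x
          = (bstar (z⁻¹ ^ (k + 1)) x - (k + 1) • bstar z⁻¹ x)
            + (k + 1) • (bstar z⁻¹ x + bstar z x) := by
        rw [zpow_negSucc, ← inv_pow, negSucc_zsmul, smul_add]
        abel
      rw [heq]
      exact tors_add h3 (tors_nsmul h4 (k + 1))
  have heq2 : bstar (m • z + c) x - m • bstar z x
      = (bstar (m • z + c) x - bstar (z ^ m) x) + (bstar (z ^ m) x - m • bstar z x) := by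
    abel
  rw [heq2, hbd]
  exact tors_add h1 h2

theorem bstar_span_formula (hTid : IsIdeal {a : A | IsOfFinAddOrder a}) {z : A}
    (hzN : z ∈ nextCenter A (torD A)) {m1 m2 : ℤ} {c1 c2 u v : A}
    (hc1 : c1 ∈ torD A) (hc2 : c2 ∈ torD A)
    (hu : u = m1 • z + c1) (hv : v = m2 • z + c2) :
    ∃ τ : A, IsOfFinAddOrder τ ∧ bstar u v = (m1 * m2) • bstar z z + τ := by
  have hτa : IsOfFinAddOrder (bstar u v - m1 • bstar z v) := by
    rw [hu]
    exact bstar_smul_add hTid hzN m1 hc1 v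
  have hzv : bstar z v = m2 • bstar z z + bstar z c2 := by
    rw [hv, bstar_add_right, bstar_zsmul_right]
  refine ⟨m1 • bstar z c2 + (bstar u v - m1 • bstar z v), ?_, ?_⟩
  · exact tors_add (tors_zsmul' (torD_star2 hc2 z) m1) hτa
  · rw [hzv]
    rw [smul_add, mul_smul]
    abel

/-- The set `ℤ z + D`. -/
def zSpan (z : A) : Set A :=
  {u : A | ∃ m : ℤ, ∃ c : A, c ∈ torD A ∧ u = m • z + c}

theorem torD_subset_zSpan {z : A} : torD A ⊆ zSpan z :=
  fun d hd => ⟨0, d, hd, by rw [zero_smul, zero_add]⟩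

theorem isIdeal_zSpan (hTid : IsIdeal {a : A | IsOfFinAddOrder a}) {z : A}
    (hzN : z ∈ nextCenter A (torD A)) : IsIdeal (zSpan z) := by
  have hD := isIdeal_torD hTid
  have hsubD : ∀ {u v : A}, u ∈ zSpan z → bstar u v ∈ torD A := by
    rintro u v ⟨m, c, hc, rfl⟩
    have h1 := bstar_smul_add hTid hzN m hc v
    have h2 : m • bstar z v ∈ torD A := hD.sb.zsmul_mem ((hzN v).1) m
    have heq : bstar (m • z + c) v
        = (bstar (m • z + c) v - m • bstar z v) + m • bstar z v := by abel
    rw [heq]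
    exact hD.sb.add_mem (tors_subset_torD hTid h1) h2
  have hsubD2 : ∀ {u : A}, u ∈ zSpan z → ∀ x : A, bstar x u ∈ torD A := by
    rintro u ⟨m, c, hc, rfl⟩ x
    have heq : bstar x (m • z + c) = m • bstar x z + bstar x c := by
      rw [bstar_add_right, bstar_zsmul_right]
    rw [heq]
    exact hD.sb.add_mem (hD.sb.zsmul_mem ((hzN x).2) m) (hD.star_left x hc)
  refine
    { subset := Set.subset_univ _
      subbrace := ?_
      ambient_subbrace := isSubbrace_univ
      star_mem_left := fun a _ u hu => torD_subset_zSpan (hsubD2 hu a)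
      star_mem_right := fun a _ u hu => torD_subset_zSpan (hsubD hu) }
  constructor
  · exact ⟨0, 0, hD.sb.zero_mem, by rw [zero_smul, zero_add]⟩
  · rintro u v ⟨m1, c1, hc1, rfl⟩ ⟨m2, c2, hc2, rfl⟩
    exact ⟨m1 + m2, c1 + c2, hD.sb.add_mem hc1 hc2, by rw [add_smul]; abel⟩
  · rintro u ⟨m, c, hc, rfl⟩
    exact ⟨-m, -c, hD.sb.neg_mem hc, by rw [neg_smul]; abel⟩
  · intro u v hu hv
    have hst : bstar u v ∈ torD A := hsubD hu
    obtain ⟨m1, c1, hc1, hu'⟩ := hu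
    obtain ⟨m2, c2, hc2, hv'⟩ := hv
    refine ⟨m1 + m2, bstar u v + c1 + c2, hD.sb.add_mem (hD.sb.add_mem hst hc1) hc2, ?_⟩
    rw [mul_eq, lam_eq, add_smul, hu', hv']
    abel
  · intro u hu
    have hst : bstar u u ∈ torD A := hsubD hu
    obtain ⟨m, c, hc, hu'⟩ := hu
    set w := lam u⁻¹ (bstar u u) with hw
    have heq : u⁻¹ = -u + w := by
      conv_lhs => rw [inv_eq_neg_lam, lam_inv_shift, ← hw]
      abel
    refine ⟨-m, -c + w,
      hD.sb.add_mem (hD.sb.neg_mem hc) (hD.lam_mem u⁻¹ hst), ?_⟩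
    rw [heq, hu', neg_smul]
    abel

end LeftBrace
namespace LeftBrace

variable {A : Type u} [LeftBrace A]

/-- The set `pℤ z + qℤ c + T`. -/
def cSet (z c : A) (p q : ℤ) : Set A :=
  {u : A | ∃ m k : ℤ, ∃ τ : A, IsOfFinAddOrder τ ∧ u = (p * m) • z + ((q * k) • c + τ)}

theorem tors_mem_cSet {z c : A} (p q : ℤ) {τ : A} (hτ : IsOfFinAddOrder τ) :
    τ ∈ cSet z c p q :=
  ⟨0, 0, τ, hτ, by rw [mul_zero, mul_zero, zero_smul, zero_smul, zero_add, zero_add]⟩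

theorem cSet_subset_zSpan {z c : A} (hcD : c ∈ torD A)
    (hTid : IsIdeal {a : A | IsOfFinAddOrder a}) (p q : ℤ) :
    cSet z c p q ⊆ zSpan z := by
  have hD := isIdeal_torD hTid
  rintro u ⟨m, k, τ, hτ, rfl⟩
  exact ⟨p * m, (q * k) • c + τ,
    hD.sb.add_mem (hD.sb.zsmul_mem hcD (q * k)) (tors_subset_torD hTid hτ), rfl⟩

theorem cSet_cpart_mem {c : A} (hcD : c ∈ torD A)
    (hTid : IsIdeal {a : A | IsOfFinAddOrder a}) (j : ℤ) {τ : A} (hτ : IsOfFinAddOrder τ) :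
    j • c + τ ∈ torD A := by
  have hD := isIdeal_torD hTid
  exact hD.sb.add_mem (hD.sb.zsmul_mem hcD j) (tors_subset_torD hTid hτ)

/-- Star of two elements written in span form, with the `cSet` coefficient grouping. -/
theorem cSet_star_calc (hTid : IsIdeal {a : A | IsOfFinAddOrder a}) {z : A}
    (hzN : z ∈ nextCenter A (torD A)) {c : A} (hcD : c ∈ torD A)
    {p1 q1 p2 q2 m1 k1 m2 k2 : ℤ} {τ1 τ2 : A} (hτ1 : IsOfFinAddOrder τ1)
    (hτ2 : IsOfFinAddOrder τ2) :
    ∃ τ : A, IsOfFinAddOrder τ ∧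
      bstar ((p1 * m1) • z + ((q1 * k1) • c + τ1)) ((p2 * m2) • z + ((q2 * k2) • c + τ2))
        = ((p1 * p2) * (m1 * m2)) • bstar z z + τ := by
  obtain ⟨τ, hτ, heq⟩ := bstar_span_formula hTid hzN
    (cSet_cpart_mem hcD hTid (q1 * k1) hτ1) (cSet_cpart_mem hcD hTid (q2 * k2) hτ2)
    (rfl : (p1 * m1) • z + ((q1 * k1) • c + τ1) = _)
    (rfl : (p2 * m2) • z + ((q2 * k2) • c + τ2) = _)
  refine ⟨τ, hτ, ?_⟩
  rw [heq]
  congr 1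
  rw [show (p1 * m1) * (p2 * m2) = (p1 * p2) * (m1 * m2) by ring]

/-- Key hypothesis: multiples `(F j) • (z ⋆ z)` are representable in `qℤ c + T`. -/
def keyRep (z c : A) (F q : ℤ) : Prop :=
  ∀ j : ℤ, ∃ k : ℤ, ∃ τ : A, IsOfFinAddOrder τ ∧ (F * j) • bstar z z = (q * k) • c + τ

theorem cSet_subbrace (hTid : IsIdeal {a : A | IsOfFinAddOrder a}) {z : A}
    (hzN : z ∈ nextCenter A (torD A)) {c : A} (hcD : c ∈ torD A) (p q : ℤ)
    (hkey : keyRep z c (p * p) q) : IsSubbrace (cSet z c p q) := by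
  have hD := isIdeal_torD hTid
  constructor
  · exact tors_mem_cSet p q tors_zero
  · rintro u v ⟨m1, k1, τ1, hτ1, rfl⟩ ⟨m2, k2, τ2, hτ2, rfl⟩
    refine ⟨m1 + m2, k1 + k2, τ1 + τ2, tors_add hτ1 hτ2, ?_⟩
    rw [mul_add p, add_smul, mul_add q, add_smul]
    abel
  · rintro u ⟨m, k, τ, hτ, rfl⟩
    refine ⟨-m, -k, -τ, tors_neg hτ, ?_⟩
    rw [mul_neg p, neg_smul, mul_neg q, neg_smul]
    abel
  · rintro u v hu hv
    obtain ⟨m1, k1, τ1, hτ1, hud⟩ := hu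
    obtain ⟨m2, k2, τ2, hτ2, hvd⟩ := hv
    obtain ⟨τ, hτ, hst⟩ := cSet_star_calc hTid hzN hcD hτ1 hτ2 (p1 := p) (q1 := q)
      (p2 := p) (q2 := q) (m1 := m1) (k1 := k1) (m2 := m2) (k2 := k2)
    obtain ⟨k', τ', hτ', hrep⟩ := hkey (m1 * m2)
    have hmul : u * v = bstar u v + u + v := by rw [mul_eq, lam_eq]; abel
    refine ⟨m1 + m2, k' + (k1 + k2), τ' + τ + (τ1 + τ2),
      tors_add (tors_add hτ' hτ) (tors_add hτ1 hτ2), ?_⟩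
    rw [hmul, hud, hvd, hst, hrep, mul_add p, add_smul, mul_add q, add_smul,
      mul_add q, add_smul]
    abel
  · rintro u hu
    obtain ⟨m, k, τ, hτ, hud⟩ := hu
    obtain ⟨τ0, hτ0, hst⟩ := cSet_star_calc hTid hzN hcD hτ hτ (p1 := p) (q1 := q)
      (p2 := p) (q2 := q) (m1 := m) (k1 := k) (m2 := m) (k2 := k)
    rw [← hud] at hst
    obtain ⟨k', τ', hτ', hrep⟩ := hkey (m * m)
    set w := lam u⁻¹ (bstar u u) with hw
    have heq : u⁻¹ = -u + w := by
      conv_lhs => rw [inv_eq_neg_lam, lam_inv_shift, ← hw]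
      abel
    have hsD : bstar z z ∈ torD A := (hzN z).1
    set b1 := bstar u⁻¹ (bstar z z) with hb1
    set l1 := lam u⁻¹ τ0 with hl1
    have hwval : w = ((p * p) * (m * m)) • bstar z z
        + (((p * p) * (m * m)) • b1 + l1) := by
      rw [hw, hst, lam_add, lam_zsmul, hb1, hl1, lam_eq u⁻¹ (bstar z z), smul_add]
      abel
    have hτ3 : IsOfFinAddOrder (((p * p) * (m * m)) • b1 + l1) :=
      tors_add (tors_zsmul' (torD_star2 hsD u⁻¹) _) (lam_tors u⁻¹ hτ0)
    refine ⟨-m, k' + -k, τ' + (((p * p) * (m * m)) • b1 + l1) + -τ,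
      tors_add (tors_add hτ' hτ3) (tors_neg hτ), ?_⟩
    rw [heq, hwval, hrep, hud, mul_neg p, neg_smul, mul_add q, add_smul, mul_neg q, neg_smul]
    abel

theorem cSet_idealIn_zSpan (hTb : IsTBrace A) (hTid : IsIdeal {a : A | IsOfFinAddOrder a})
    {z : A} (hzN : z ∈ nextCenter A (torD A)) {c : A} (hcD : c ∈ torD A) (p q : ℤ)
    (hkeyp : keyRep z c p q) (hkeypp : keyRep z c (p * p) q) :
    IsIdeal (cSet z c p q) := by
  have hD := isIdeal_torD hTid
  have hI1 : IsIdeal (zSpan z) := isIdeal_zSpan hTid hzN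
  refine hTb _ _ ?_ hI1
  refine
    { subset := cSet_subset_zSpan hcD hTid p q
      subbrace := cSet_subbrace hTid hzN hcD p q hkeypp
      ambient_subbrace := hI1.sb
      star_mem_left := ?_
      star_mem_right := ?_ }
  · rintro a ⟨m1, c1, hc1, rfl⟩ w ⟨m, k, τ, hτ, rfl⟩
    obtain ⟨τ0, hτ0, hst⟩ := bstar_span_formula hTid hzN hc1
      (cSet_cpart_mem hcD hTid (q * k) hτ) rfl rfl
    obtain ⟨k', τ', hτ', hrep⟩ := hkeyp (m1 * m)
    refine ⟨0, k', τ' + τ0, tors_add hτ' hτ0, ?_⟩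
    rw [hst, mul_zero, zero_smul, zero_add,
      show m1 * (p * m) = p * (m1 * m) by ring, hrep]
    abel
  · rintro a ⟨m1, c1, hc1, rfl⟩ w ⟨m, k, τ, hτ, rfl⟩
    obtain ⟨τ0, hτ0, hst⟩ := bstar_span_formula hTid hzN
      (cSet_cpart_mem hcD hTid (q * k) hτ) hc1 rfl rfl
    obtain ⟨k', τ', hτ', hrep⟩ := hkeyp (m * m1)
    refine ⟨0, k', τ' + τ0, tors_add hτ' hτ0, ?_⟩
    rw [hst, mul_zero, zero_smul, zero_add,
      show (p * m) * m1 = p * (m * m1) by ring, hrep]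
    abel

theorem cSet_idealIn (hTid : IsIdeal {a : A | IsOfFinAddOrder a})
    {z : A} (hzN : z ∈ nextCenter A (torD A)) {c : A} (hcD : c ∈ torD A)
    (p q p' q' : ℤ) (hp : p' ∣ p) (hq : q' ∣ q)
    (hkeypp : keyRep z c (p * p) q) (hkeypp' : keyRep z c (p' * p') q')
    (hkeyx : keyRep z c (p * p') q) :
    IsIdealIn (cSet z c p q) (cSet z c p' q') := by
  obtain ⟨e, he⟩ := hp
  obtain ⟨f, hf⟩ := hq
  refine
    { subset := ?_
      subbrace := cSet_subbrace hTid hzN hcD p q hkeypp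
      ambient_subbrace := cSet_subbrace hTid hzN hcD p' q' hkeypp'
      star_mem_left := ?_
      star_mem_right := ?_ }
  · rintro u ⟨m, k, τ, hτ, rfl⟩
    refine ⟨e * m, f * k, τ, hτ, ?_⟩
    rw [show p' * (e * m) = p * m by rw [he]; ring, show q' * (f * k) = q * k by rw [hf]; ring]
  · rintro a ⟨m1, k1, τ1, hτ1, rfl⟩ w ⟨m, k, τ, hτ, rfl⟩
    obtain ⟨τ0, hτ0, hst⟩ := cSet_star_calc hTid hzN hcD hτ1 hτ (p1 := p') (q1 := q')
      (p2 := p) (q2 := q) (m1 := m1) (k1 := k1) (m2 := m) (k2 := k)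
    obtain ⟨k', τ', hτ', hrep⟩ := hkeyx (m1 * m)
    refine ⟨0, k', τ' + τ0, tors_add hτ' hτ0, ?_⟩
    rw [hst, mul_zero, zero_smul, zero_add,
      show (p' * p) * (m1 * m) = (p * p') * (m1 * m) by ring, hrep]
    abel
  · rintro a ⟨m1, k1, τ1, hτ1, rfl⟩ w ⟨m, k, τ, hτ, rfl⟩
    obtain ⟨τ0, hτ0, hst⟩ := cSet_star_calc hTid hzN hcD hτ hτ1 (p1 := p) (q1 := q)
      (p2 := p') (q2 := q') (m1 := m) (k1 := k) (m2 := m1) (k2 := k1)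
    obtain ⟨k', τ', hτ', hrep⟩ := hkeyx (m * m1)
    refine ⟨0, k', τ' + τ0, tors_add hτ' hτ0, ?_⟩
    rw [hst, mul_zero, zero_smul, zero_add,
      show (p * p') * (m * m1) = (p * p') * (m * m1) by ring, hrep]
    abel

end LeftBrace
namespace LeftBrace

variable {A : Type u} [LeftBrace A]

theorem crux (hTb : IsTBrace A) (hTid : IsIdeal {a : A | IsOfFinAddOrder a})
    {z : A} (hzN : z ∈ nextCenter A (torD A)) : z ∈ torD A := by
  have hD := isIdeal_torD hTid
  have hrel : ∀ (m : ℤ) (d : A), d ∈ torD A → m • z = d → ∀ y : A,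
      IsOfFinAddOrder (m • bstar z y) := by
    intro m d hd hmd y
    have h1 : IsOfFinAddOrder (bstar (m • z) y) := by rw [hmd]; exact torD_star1 hd y
    have h2 := bstar_smul_add hTid hzN m hD.sb.zero_mem y
    rw [add_zero] at h2
    have heq : m • bstar z y = bstar (m • z) y - (bstar (m • z) y - m • bstar z y) := by abel
    rw [heq]
    exact tors_sub h1 h2
  have hsD : bstar z z ∈ torD A := (hzN z).1
  have hkeyA : ∀ F q : ℤ, q ∣ F → keyRep z (bstar z z) F q := by
    intro F q hdvd j
    obtain ⟨e, he⟩ := hdvd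
    refine ⟨e * j, 0, tors_zero, by rw [add_zero, he, mul_assoc]⟩
  have hId1 : IsIdeal (cSet z (bstar z z) 1 1) :=
    cSet_idealIn_zSpan hTb hTid hzN hsD 1 1 (hkeyA 1 1 (by norm_num))
      (hkeyA (1 * 1) 1 (by norm_num))
  have hId2 : IsIdeal (cSet z (bstar z z) 2 2) :=
    hTb _ _ (cSet_idealIn hTid hzN hsD 2 2 1 1 (by norm_num) (by norm_num)
      (hkeyA (2 * 2) 2 (by norm_num)) (hkeyA (1 * 1) 1 (by norm_num))
      (hkeyA (2 * 1) 2 (by norm_num))) hId1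
  have hId3 : IsIdeal (cSet z (bstar z z) 2 4) :=
    hTb _ _ (cSet_idealIn hTid hzN hsD 2 4 2 2 (by norm_num) (by norm_num)
      (hkeyA (2 * 2) 4 (by norm_num)) (hkeyA (2 * 2) 2 (by norm_num))
      (hkeyA (2 * 2) 4 (by norm_num))) hId2
  have h2z : (2 : ℤ) • z ∈ cSet z (bstar z z) 2 4 := by
    refine ⟨1, 0, 0, tors_zero, ?_⟩
    norm_num
  have hin : bstar z ((2 : ℤ) • z) ∈ cSet z (bstar z z) 2 4 := hId3.star_left z h2z
  rw [bstar_zsmul_right] at hin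
  obtain ⟨m, k, τ, hτ, heq⟩ := hin
  have hsT : IsOfFinAddOrder (bstar z z) := by
    by_cases hm : m = 0
    · rw [hm, mul_zero, zero_smul, zero_add] at heq
      have h5 : ((2 : ℤ) - 4 * k) • bstar z z = τ := by
        rw [sub_smul, heq]
        abel
      exact tors_of_zsmul (show (2 : ℤ) - 4 * k ≠ 0 by omega) (by rw [h5]; exact hτ)
    · have hdval : (2 * m) • z = (2 : ℤ) • bstar z z - (4 * k) • bstar z z - τ := by
        rw [heq]; abel
      have hdD : (2 : ℤ) • bstar z z - (4 * k) • bstar z z - τ ∈ torD A :=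
        hD.sb.sub_mem (hD.sb.sub_mem (hD.sb.zsmul_mem hsD 2) (hD.sb.zsmul_mem hsD (4 * k)))
          (tors_subset_torD hTid hτ)
      have h6 := hrel (2 * m) _ hdD hdval z
      exact tors_of_zsmul (mul_ne_zero two_ne_zero hm) h6
  intro y
  constructor
  · show IsOfFinAddOrder (bstar z y)
    by_contra hc0
    have hc0D : bstar z y ∈ torD A := (hzN y).1
    have hkeyB : ∀ F q : ℤ, keyRep z (bstar z y) F q := by
      intro F q j
      exact ⟨0, (F * j) • bstar z z, tors_zsmul' hsT _, by rw [mul_zero, zero_smul, zero_add]⟩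
    have hIdB1 : IsIdeal (cSet z (bstar z y) 1 1) :=
      cSet_idealIn_zSpan hTb hTid hzN hc0D 1 1 (hkeyB 1 1) (hkeyB (1 * 1) 1)
    have hIdB2 : IsIdeal (cSet z (bstar z y) 2 4) :=
      hTb _ _ (cSet_idealIn hTid hzN hc0D 2 4 1 1 (by norm_num) (by norm_num)
        (hkeyB (2 * 2) 4) (hkeyB (1 * 1) 1) (hkeyB (2 * 1) 4)) hIdB1
    have h2zB : (2 : ℤ) • z ∈ cSet z (bstar z y) 2 4 := by
      refine ⟨1, 0, 0, tors_zero, ?_⟩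
      norm_num
    have hinB : bstar ((2 : ℤ) • z) y ∈ cSet z (bstar z y) 2 4 := hIdB2.star_right y h2zB
    have hdiff := bstar_smul_add hTid hzN 2 hD.sb.zero_mem y
    rw [add_zero] at hdiff
    have h2c : (2 : ℤ) • bstar z y ∈ cSet z (bstar z y) 2 4 := by
      have heq2 : (2 : ℤ) • bstar z y
          = bstar ((2 : ℤ) • z) y + -(bstar ((2 : ℤ) • z) y - (2 : ℤ) • bstar z y) := by abel
      rw [heq2]
      exact (cSet_subbrace hTid hzN hc0D 2 4 (hkeyB (2 * 2) 4)).add_mem hinB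
        (tors_mem_cSet 2 4 (tors_neg hdiff))
    obtain ⟨m1, k1, τ1, hτ1, heqB⟩ := h2c
    by_cases hm : m1 = 0
    · rw [hm, mul_zero, zero_smul, zero_add] at heqB
      have h5 : ((2 : ℤ) - 4 * k1) • bstar z y = τ1 := by rw [sub_smul, heqB]; abel
      exact hc0 (tors_of_zsmul (show (2 : ℤ) - 4 * k1 ≠ 0 by omega) (by rw [h5]; exact hτ1))
    · have hdval : (2 * m1) • z = (2 : ℤ) • bstar z y - (4 * k1) • bstar z y - τ1 := by
        rw [heqB]; abel
      have hdD : (2 : ℤ) • bstar z y - (4 * k1) • bstar z y - τ1 ∈ torD A :=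
        hD.sb.sub_mem (hD.sb.sub_mem (hD.sb.zsmul_mem hc0D 2) (hD.sb.zsmul_mem hc0D (4 * k1)))
          (tors_subset_torD hTid hτ1)
      have h6 := hrel (2 * m1) _ hdD hdval y
      exact hc0 (tors_of_zsmul (mul_ne_zero two_ne_zero hm) h6)
  · show IsOfFinAddOrder (bstar y z)
    by_contra hc0
    have hc0D : bstar y z ∈ torD A := (hzN y).2
    have hkeyB : ∀ F q : ℤ, keyRep z (bstar y z) F q := by
      intro F q j
      exact ⟨0, (F * j) • bstar z z, tors_zsmul' hsT _, by rw [mul_zero, zero_smul, zero_add]⟩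
    have hIdB1 : IsIdeal (cSet z (bstar y z) 1 1) :=
      cSet_idealIn_zSpan hTb hTid hzN hc0D 1 1 (hkeyB 1 1) (hkeyB (1 * 1) 1)
    have hIdB2 : IsIdeal (cSet z (bstar y z) 2 4) :=
      hTb _ _ (cSet_idealIn hTid hzN hc0D 2 4 1 1 (by norm_num) (by norm_num)
        (hkeyB (2 * 2) 4) (hkeyB (1 * 1) 1) (hkeyB (2 * 1) 4)) hIdB1
    have h2zB : (2 : ℤ) • z ∈ cSet z (bstar y z) 2 4 := by
      refine ⟨1, 0, 0, tors_zero, ?_⟩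
      norm_num
    have hinB : bstar y ((2 : ℤ) • z) ∈ cSet z (bstar y z) 2 4 := hIdB2.star_left y h2zB
    rw [bstar_zsmul_right] at hinB
    obtain ⟨m1, k1, τ1, hτ1, heqB⟩ := hinB
    by_cases hm : m1 = 0
    · rw [hm, mul_zero, zero_smul, zero_add] at heqB
      have h5 : ((2 : ℤ) - 4 * k1) • bstar y z = τ1 := by rw [sub_smul, heqB]; abel
      exact hc0 (tors_of_zsmul (show (2 : ℤ) - 4 * k1 ≠ 0 by omega) (by rw [h5]; exact hτ1))
    · have hdval : (2 * m1) • z = (2 : ℤ) • bstar y z - (4 * k1) • bstar y z - τ1 := by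
        rw [heqB]; abel
      have hdD : (2 : ℤ) • bstar y z - (4 * k1) • bstar y z - τ1 ∈ torD A :=
        hD.sb.sub_mem (hD.sb.sub_mem (hD.sb.zsmul_mem hc0D 2) (hD.sb.zsmul_mem hc0D (4 * k1)))
          (tors_subset_torD hTid hτ1)
      have h7 : IsOfFinAddOrder ((2 * m1) • bstar y z) := by
        have hb : bstar y ((2 * m1) • z) = (2 * m1) • bstar y z := bstar_zsmul_right y (2 * m1) z
        rw [← hb, hdval]
        exact torD_star2 hdD y
      exact hc0 (tors_of_zsmul (mul_ne_zero two_ne_zero hm) h7)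

theorem zeta_subset_torD (hTb : IsTBrace A) (hTid : IsIdeal {a : A | IsOfFinAddOrder a})
    (o : Ordinal.{v}) : zetaOrd A o ⊆ torD A := by
  induction o using Ordinal.limitRecOn with
  | zero =>
    rw [zetaOrd_zero]
    intro a ha
    rw [Set.mem_singleton_iff] at ha
    rw [ha]
    exact (isIdeal_torD hTid).sb.zero_mem
  | add_one o ih =>
    rw [Ordinal.add_one_eq_succ]
    rw [zetaOrd_succ]
    intro zz hz
    refine crux hTb hTid ?_
    intro x
    exact ⟨ih ((hz x).1), ih ((hz x).2)⟩
  | limit o ho ih =>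
    rw [zetaOrd_limit o ho]
    intro a ha
    obtain ⟨o', h1⟩ := Set.mem_iUnion.mp ha
    obtain ⟨hlt, hmem⟩ := Set.mem_iUnion.mp h1
    exact ih o' hlt hmem

end LeftBrace
open LeftBrace in
/-- **Corollary 3.** If `A` is a non-periodic `⋆`-hypercentral T-brace and `T` is the
torsion subgroup of `(A,+)`, then `T` is an ideal of `A` and `A/T` is an abelian brace
(equivalently, `a ⋆ b ∈ T` for all `a, b ∈ A`). -/
theorem torsion_isIdeal_and_quotient_abelian
    {A : Type u} [LeftBrace A] (hT : IsTBrace A)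
    (hhc : IsStarHypercentral A)
    (hnp : ¬ ∀ a : A, IsOfFinAddOrder a) :
    IsIdeal {a : A | IsOfFinAddOrder a} ∧
      ∀ a b : A, bstar a b ∈ {a : A | IsOfFinAddOrder a} := by
  have hTid : IsIdeal {a : A | IsOfFinAddOrder a} := by
    refine
      { subset := Set.subset_univ _
        subbrace := ?_
        ambient_subbrace := isSubbrace_univ
        star_mem_left := ?_
        star_mem_right := ?_ }
    · constructor
      · exact tors_zero
      · intro a b ha hb
        exact tors_add ha hb
      · intro a ha
        exact tors_neg ha
      · intro a b ha hb
        show IsOfFinAddOrder (a * b)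
        have h : a * b = bstar a b + a + b := by rw [mul_eq, lam_eq]; abel
        rw [h]
        exact tors_add (tors_add (tors_bstar_self hb a) ha) hb
      · intro a ha
        show IsOfFinAddOrder a⁻¹
        rw [inv_eq_neg_lam]
        exact tors_neg (lam_tors a⁻¹ ha)
    · intro a _ t ht
      exact tors_bstar_self ht a
    · intro a _ t ht
      exact tors_bstar_left_of_hypercentral hhc ht a
  obtain ⟨γ, hγ⟩ := hhc
  have hsub : zetaOrd A γ ⊆ torD A := zeta_subset_torD hT hTid γ
  refine ⟨hTid, ?_⟩
  intro a b
  have haD : a ∈ torD A := hsub (by rw [hγ]; trivial)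
  exact (haD b).1
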